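/- For N ≥ 2, β ∈ (1/(2N-1), 1/N), t ∈ [−1,1] with Ω_{±N}-code (t_ℓ), the set D_t := π(∏_ℓ ({0,…,N−1} ∩ ({0,…,N−1}+t_ℓ))) is centrally symmetric about (1+t)/2: namely 1 + t − D_t = D_t. -/

import Mathlib

lemma summable_aux (β : ℝ) (hβ0 : 0 < β) (hβ1 : β < 1) (M : ℝ) (k : ℝ) (a : ℕ → ℤ)
    (ha : ∀ n, |(a n : ℝ)| ≤ M) :
    Summable (fun n => (a n : ℝ) * β ^ n * k) := by
  apply Summable.of_norm_bounded (g := fun n => (M * |k|) * β ^ n)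
    ((summable_geometric_of_lt_one hβ0.le hβ1).mul_left _)
  intro n
  rw [Real.norm_eq_abs, abs_mul, abs_mul, abs_pow, abs_of_pos hβ0]
  have h1 := ha n
  have h2 : (0:ℝ) ≤ β ^ n := by positivity
  nlinarith [mul_le_mul_of_nonneg_right (mul_le_mul_of_nonneg_right h1 h2) (abs_nonneg k)]

lemma sum_symm (N : ℕ) (hN : 2 ≤ N) (β : ℝ) (hβ0 : 0 < β) (hβ1 : β < 1)
    (c j : ℕ → ℤ) (hc : ∀ n, |c n| ≤ (N : ℤ) - 1)
    (hj : ∀ n, (0 ≤ j n ∧ j n < N) ∧ (0 ≤ j n - c n ∧ j n - c n < N)) :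
    ∑' n, (((N : ℤ) - 1 + c n - j n : ℤ) : ℝ) * β ^ n * (1 - β) / ((N : ℝ) - 1)
      = 1 + (∑' n, (c n : ℝ) * β ^ n * (1 - β) / ((N : ℝ) - 1))
          - ∑' n, (j n : ℝ) * β ^ n * (1 - β) / ((N : ℝ) - 1) := by
  have hN1 : (1:ℝ) ≤ (N:ℝ) - 1 := by
    have : (2:ℝ) ≤ N := by exact_mod_cast hN
    linarith
  have hNne : ((N:ℝ) - 1) ≠ 0 := by linarith
  have hcb : ∀ n, |(c n : ℝ)| ≤ (N:ℝ) - 1 := by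
    intro n
    have := hc n
    rw [← Int.cast_abs]
    push_cast
    exact_mod_cast this
  have hjb : ∀ n, |(j n : ℝ)| ≤ (N:ℝ) - 1 := by
    intro n
    obtain ⟨⟨h1, h2⟩, _⟩ := hj n
    rw [abs_le]
    constructor
    · have : (0:ℝ) ≤ (j n : ℝ) := by exact_mod_cast h1
      linarith
    · have : (j n : ℝ) ≤ (N:ℝ) - 1 := by
        have : j n ≤ (N:ℤ) - 1 := by omega
        exact_mod_cast this
      exact this
  have hsc : Summable (fun n => (c n : ℝ) * β ^ n * ((1 - β) / ((N : ℝ) - 1))) :=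
    summable_aux β hβ0 hβ1 _ _ c hcb
  have hsj : Summable (fun n => (j n : ℝ) * β ^ n * ((1 - β) / ((N : ℝ) - 1))) :=
    summable_aux β hβ0 hβ1 _ _ j hjb
  have hsg : Summable (fun n : ℕ => β ^ n * (1 - β)) :=
    (summable_geometric_of_lt_one hβ0.le hβ1).mul_right _
  have e1 : ∀ (a : ℕ → ℤ),
      (fun n => (a n : ℝ) * β ^ n * (1 - β) / ((N : ℝ) - 1))
        = fun n => (a n : ℝ) * β ^ n * ((1 - β) / ((N : ℝ) - 1)) := by
    intro a; funext n; ring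
  have key : ∀ n, (((N : ℤ) - 1 + c n - j n : ℤ) : ℝ) * β ^ n * (1 - β) / ((N : ℝ) - 1)
      = β ^ n * (1 - β) + ((c n : ℝ) * β ^ n * ((1 - β) / ((N : ℝ) - 1))
          - (j n : ℝ) * β ^ n * ((1 - β) / ((N : ℝ) - 1))) := by
    intro n
    push_cast
    field_simp
    ring
  rw [tsum_congr key, hsg.tsum_add (hsc.sub hsj), hsc.tsum_sub hsj,
    e1 c, e1 j, tsum_mul_right, tsum_geometric_of_lt_one hβ0.le hβ1]
  rw [inv_mul_cancel₀ (by linarith : (1:ℝ) - β ≠ 0)]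
  ring

/-- the set D_t = π(∏ ({0,…,N−1} ∩ ({0,…,N−1}+t_ℓ))) is
centrally symmetric: 1 + t − D_t = D_t. -/
theorem stmt4 (N : ℕ) (hN : 2 ≤ N) (β t : ℝ)
    (h1 : 1 / (2 * (N : ℝ) - 1) < β) (h2 : β < 1 / (N : ℝ))
    (ht : t ∈ Set.Icc (-1 : ℝ) 1)
    (c : ℕ → ℤ) (hc : ∀ n, |c n| ≤ (N : ℤ) - 1)
    (hcode : t = ∑' n, (c n : ℝ) * β ^ n * (1 - β) / ((N : ℝ) - 1)) :
    (fun x => 1 + t - x) ''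
        {x | ∃ j : ℕ → ℤ,
          (∀ n, (0 ≤ j n ∧ j n < N) ∧ (0 ≤ j n - c n ∧ j n - c n < N)) ∧
          x = ∑' n, (j n : ℝ) * β ^ n * (1 - β) / ((N : ℝ) - 1)}
      = {x | ∃ j : ℕ → ℤ,
          (∀ n, (0 ≤ j n ∧ j n < N) ∧ (0 ≤ j n - c n ∧ j n - c n < N)) ∧
          x = ∑' n, (j n : ℝ) * β ^ n * (1 - β) / ((N : ℝ) - 1)} := by
  have hN2 : (2:ℝ) ≤ (N:ℝ) := by exact_mod_cast hN
  have hβ0 : 0 < β := lt_trans (div_pos one_pos (by linarith)) h1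
  have hβ1 : β < 1 := lt_of_lt_of_le h2 (by
    rw [div_le_one (by linarith)]; linarith)
  ext x
  simp only [Set.mem_image, Set.mem_setOf_eq]
  constructor
  · rintro ⟨y, ⟨j, hj, rfl⟩, rfl⟩
    refine ⟨fun n => (N : ℤ) - 1 + c n - j n, fun n => ?_, ?_⟩
    · obtain ⟨⟨a1, a2⟩, b1, b2⟩ := hj n
      dsimp only
      constructor <;> constructor <;> omega
    · rw [sum_symm N hN β hβ0 hβ1 c j hc hj, hcode]
  · rintro ⟨j, hj, rfl⟩
    refine ⟨∑' n, (((N : ℤ) - 1 + c n - j n : ℤ) : ℝ) * β ^ n * (1 - β) / ((N : ℝ) - 1),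
      ⟨fun n => (N : ℤ) - 1 + c n - j n, fun n => ?_, rfl⟩, ?_⟩
    · obtain ⟨⟨a1, a2⟩, b1, b2⟩ := hj n
      dsimp only
      constructor <;> constructor <;> omega
    · rw [sum_symm N hN β hβ0 hβ1 c j hc hj, hcode]; ring
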